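/- Unbiasedness of the two-sample aleatoric estimator: if θ_A and θ_B are independent random variables with the same distribution as θ, then E_{θ_A,θ_B}[Cov_i(y_i(θ_A), y_i(θ_B))] = Var_i(E_θ[y_i(θ)]), where Cov_i(u_i, v_i) := (1/N)Σ_j (u_j − E_i[u_i])(v_j − E_i[v_i]). -/

import Mathlib

open MeasureTheory ProbabilityTheory

/-- Empirical mean over the uniform distribution on `Fin N`. -/
noncomputable def empMean {N : ℕ} (v : Fin N → ℝ) : ℝ := (∑ i, v i) / N

/-- Empirical covariance over the uniform distribution on `Fin N`. -/
noncomputable def empCov {N : ℕ} (u v : Fin N → ℝ) : ℝ :=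
  (∑ j, (u j - empMean u) * (v j - empMean v)) / N

/-- Empirical variance over the uniform distribution on `Fin N`. -/
noncomputable def empVar {N : ℕ} (v : Fin N → ℝ) : ℝ := empCov v v

/-- Unbiasedness of the two-sample aleatoric estimator: if `θ_A` and `θ_B` are
independent random variables each distributed according to the posterior `μ`, then
`E_{θ_A,θ_B}[Cov_i(y_i(θ_A), y_i(θ_B))] = Var_i(E_θ[y_i(θ)])`. -/
theorem aleatoric_estimator_unbiased
    {Ω Θ : Type*} [MeasurableSpace Ω] [MeasurableSpace Θ]
    (P : Measure Ω) [IsProbabilityMeasure P]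
    (μ : Measure Θ) [IsProbabilityMeasure μ]
    (θA θB : Ω → Θ) (hθA : Measurable θA) (hθB : Measurable θB)
    (hindep : IndepFun θA θB P)
    (hlawA : Measure.map θA P = μ) (hlawB : Measure.map θB P = μ)
    (N : ℕ) (hN : 0 < N) (y : Fin N → Θ → ℝ)
    (hmeas : ∀ i, Measurable (y i)) (hL2 : ∀ i, MemLp (y i) 2 μ) :
    ∫ ω, empCov (fun i => y i (θA ω)) (fun i => y i (θB ω)) ∂P =
      empVar (fun i => ∫ θ, y i θ ∂μ) := by
  -- centered function
  set φ : Fin N → Θ → ℝ := fun j θ => y j θ - (∑ i, y i θ) / N with hφ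
  have hφmeas : ∀ j, Measurable (φ j) := fun j =>
    ((hmeas j).sub ((Finset.measurable_sum _ fun i _ => hmeas i).div_const _))
  have hyint : ∀ i, Integrable (y i) μ := fun i => (hL2 i).integrable (by norm_num)
  have hφint : ∀ j, Integrable (φ j) μ := fun j =>
    (hyint j).sub ((integrable_finset_sum _ fun i _ => hyint i).div_const _)
  have hintA : ∀ j, Integrable (fun ω => φ j (θA ω)) P := by
    intro j
    have := (integrable_map_measure (hφmeas j).aestronglyMeasurable hθA.aemeasurable).mp
      (hlawA ▸ hφint j)
    exact this
  have hintB : ∀ j, Integrable (fun ω => φ j (θB ω)) P := by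
    intro j
    have := (integrable_map_measure (hφmeas j).aestronglyMeasurable hθB.aemeasurable).mp
      (hlawB ▸ hφint j)
    exact this
  have hindj : ∀ j, IndepFun (fun ω => φ j (θA ω)) (fun ω => φ j (θB ω)) P := fun j =>
    hindep.comp (hφmeas j) (hφmeas j)
  have hmulint : ∀ j, Integrable (fun ω => φ j (θA ω) * φ j (θB ω)) P := fun j =>
    (hindj j).integrable_mul (hintA j) (hintB j)
  have hEA : ∀ j, ∫ ω, φ j (θA ω) ∂P = ∫ θ, φ j θ ∂μ := by
    intro j
    rw [← hlawA, integral_map hθA.aemeasurable (hφmeas j).aestronglyMeasurable]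
  have hEB : ∀ j, ∫ ω, φ j (θB ω) ∂P = ∫ θ, φ j θ ∂μ := by
    intro j
    rw [← hlawB, integral_map hθB.aemeasurable (hφmeas j).aestronglyMeasurable]
  have hEφ : ∀ j, ∫ θ, φ j θ ∂μ =
      (∫ θ, y j θ ∂μ) - (∑ i, ∫ θ, y i θ ∂μ) / N := by
    intro j
    rw [hφ]
    rw [integral_sub (hyint j) ((integrable_finset_sum _ fun i _ => hyint i).div_const _),
      integral_div, integral_finset_sum _ fun i _ => hyint i]
  calc ∫ ω, empCov (fun i => y i (θA ω)) (fun i => y i (θB ω)) ∂P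
      = ∫ ω, (∑ j, φ j (θA ω) * φ j (θB ω)) / N ∂P := by
        simp only [empCov, empMean, hφ]
    _ = (∑ j, ∫ ω, φ j (θA ω) * φ j (θB ω) ∂P) / N := by
        rw [integral_div, integral_finset_sum _ fun j _ => hmulint j]
    _ = (∑ j, ((∫ θ, y j θ ∂μ) - (∑ i, ∫ θ, y i θ ∂μ) / N) *
          ((∫ θ, y j θ ∂μ) - (∑ i, ∫ θ, y i θ ∂μ) / N)) / N := by
        congr 1
        refine Finset.sum_congr rfl fun j _ => ?_
        have := IndepFun.integral_mul_eq_mul_integral (hindj j) (hintA j).aestronglyMeasurable (hintB j).aestronglyMeasurable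
        simp only [Pi.mul_apply] at this
        rw [this, hEA j, hEB j, hEφ j]
    _ = empVar (fun i => ∫ θ, y i θ ∂μ) := by
        simp only [empVar, empCov, empMean]
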